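/- Let d ≥ 1, J > 0, β ≥ 0 and let Λ ⊂ ℤ^d be finite. For every n ≥ 2 and every tree T on the vertex set {1,…,n}, (1/|Λ|^n) Σ_{(x_1,…,x_n) ∈ Λ^n} Π_{{i,j} ∈ E(T)} (1 − e^{−β|V(x_i−x_j)|}) ≤ [C̄_{J,d}(β)]^{n−1} / |Λ|^{n−1}, where C̄_{J,d}(β) := 1 + 2d(1 − e^{−4βJ}) and the factor 1 − e^{−β|V(x)|} is interpreted as 1 when x = 0. -/

import Mathlib

open scoped BigOperators Classical

noncomputable section
namespace IsingCE

/-- squared Euclidean norm on `ℤ^d`; it equals `1` exactly at nearest neighbors. -/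
def sqnorm {d : ℕ} (x : Fin d → ℤ) : ℤ := ∑ i, (x i)^2

/-- the tree-graph factor `1 - e^{-β|V(x)|}`, interpreted as `1` at `x = 0`. -/
noncomputable def phiTG (d : ℕ) (β J : ℝ) (x : Fin d → ℤ) : ℝ :=
  if x = 0 then 1 else if sqnorm x = 1 then 1 - Real.exp (-(4*β*J)) else 0

/-- `C̄_{J,d}(β) = 1 + 2d(1 - e^{-4βJ})`. -/
noncomputable def Cbar (d : ℕ) (β J : ℝ) : ℝ := 1 + 2*d*(1 - Real.exp (-(4*β*J)))

/-- product of the weights `w i j` over the edges of the graph `g`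
(each edge `{i,j}` counted once, with `i < j`). -/
noncomputable def graphProd {α : Type*} [Fintype α] [LinearOrder α]
    (g : SimpleGraph α) (w : α → α → ℝ) : ℝ :=
  ∏ p ∈ Finset.univ.filter (fun p : α × α => p.1 < p.2 ∧ g.Adj p.1 p.2), w p.1 p.2

/-! ### Auxiliary lemmas -/

section Aux

variable {d : ℕ} {β J : ℝ}

lemma exp_le_one (hJ : 0 < J) (hβ : 0 ≤ β) : Real.exp (-(4*β*J)) ≤ 1 := by
  rw [Real.exp_le_one_iff]
  nlinarith [mul_nonneg hβ hJ.le]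

lemma phiTG_nonneg (hJ : 0 < J) (hβ : 0 ≤ β) (x : Fin d → ℤ) : 0 ≤ phiTG d β J x := by
  unfold phiTG
  have := exp_le_one hJ hβ
  split_ifs <;> linarith

lemma phiTG_le_one (x : Fin d → ℤ) : phiTG d β J x ≤ 1 := by
  unfold phiTG
  have := Real.exp_pos (-(4*β*J))
  split_ifs <;> linarith

lemma phiTG_neg (x : Fin d → ℤ) : phiTG d β J (-x) = phiTG d β J x := by
  have hs : sqnorm (-x) = sqnorm x := by
    unfold sqnorm; apply Finset.sum_congr rfl; intro i _
    simp [neg_sq]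
  unfold phiTG
  rw [hs]
  simp only [neg_eq_zero]

lemma sqnorm_eq_one {x : Fin d → ℤ} (h : sqnorm x = 1) :
    ∃ i, x = Pi.single i 1 ∨ x = Pi.single i (-1) := by
  unfold sqnorm at h
  have hx : ∃ i, x i ≠ 0 := by
    by_contra hc
    push_neg at hc
    simp [hc] at h
  obtain ⟨i, hi⟩ := hx
  have h1 : 1 ≤ (x i)^2 := by
    nlinarith [Int.one_le_abs hi, sq_abs (x i), abs_nonneg (x i)]
  have hsplit : (x i)^2 + ∑ j ∈ Finset.univ.erase i, (x j)^2 = 1 := by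
    rw [Finset.add_sum_erase _ (fun j => (x j)^2) (Finset.mem_univ i)]; exact h
  have hnn : 0 ≤ ∑ j ∈ Finset.univ.erase i, (x j)^2 :=
    Finset.sum_nonneg fun j _ => sq_nonneg _
  have hrest : ∑ j ∈ Finset.univ.erase i, (x j)^2 = 0 := by omega
  have hz : ∀ j, j ≠ i → x j = 0 := by
    intro j hj
    have := (Finset.sum_eq_zero_iff_of_nonneg (fun k _ => sq_nonneg (x k))).mp hrest j
      (by simp [hj])
    exact pow_eq_zero_iff (two_ne_zero) |>.mp this
  have hsq : (x i)^2 = 1 := by omega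
  have hxi : x i = 1 ∨ x i = -1 := by
    have hfac : (x i - 1) * (x i + 1) = 0 := by nlinarith
    rcases mul_eq_zero.mp hfac with h' | h'
    · left; omega
    · right; omega
  refine ⟨i, ?_⟩
  rcases hxi with h' | h'
  · left; funext j
    by_cases hj : j = i
    · subst hj; simp [h']
    · simp [hz j hj, Pi.single_eq_of_ne hj]
  · right; funext j
    by_cases hj : j = i
    · subst hj; simp [h']
    · simp [hz j hj, Pi.single_eq_of_ne hj]

lemma card_nbrs (Λ : Finset (Fin d → ℤ)) (z : Fin d → ℤ) :
    (Λ.filter (fun y => sqnorm (y - z) = 1)).card ≤ 2 * d := by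
  classical
  set U : Finset (Fin d → ℤ) :=
    ((Finset.univ : Finset (Fin d)).image fun i => z + Pi.single i 1) ∪
    ((Finset.univ : Finset (Fin d)).image fun i => z + Pi.single i (-1)) with hU
  have hsub : Λ.filter (fun y => sqnorm (y - z) = 1) ⊆ U := by
    intro y hy
    have hy1 : sqnorm (y - z) = 1 := (Finset.mem_filter.mp hy).2
    obtain ⟨i, hi⟩ := sqnorm_eq_one hy1
    have hyz : ∀ s : Fin d → ℤ, y - z = s → y = z + s := by
      intro s hs; rw [← hs]; ring
    rcases hi with h' | h'
    · exact Finset.mem_union_left _ (Finset.mem_image.mpr ⟨i, Finset.mem_univ i, (hyz _ h').symm⟩)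
    · exact Finset.mem_union_right _ (Finset.mem_image.mpr ⟨i, Finset.mem_univ i, (hyz _ h').symm⟩)
  calc (Λ.filter (fun y => sqnorm (y - z) = 1)).card ≤ U.card := Finset.card_le_card hsub
    _ ≤ ((Finset.univ : Finset (Fin d)).image fun i => z + Pi.single i 1).card +
        ((Finset.univ : Finset (Fin d)).image fun i => z + Pi.single i (-1)).card :=
      Finset.card_union_le _ _
    _ ≤ d + d := by
      gcongr <;> simpa using (Finset.card_image_le (s := (Finset.univ : Finset (Fin d))))
    _ = 2 * d := by ring

lemma site_bound (hJ : 0 < J) (hβ : 0 ≤ β) (Λ : Finset (Fin d → ℤ)) (z : Fin d → ℤ) :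
    ∑ y ∈ Λ, phiTG d β J (y - z) ≤ Cbar d β J := by
  classical
  set ε := 1 - Real.exp (-(4*β*J)) with hε
  have hε0 : 0 ≤ ε := by have := exp_le_one hJ hβ; rw [hε]; linarith
  have hpt : ∀ y : Fin d → ℤ, phiTG d β J (y - z) =
      (if y = z then (1:ℝ) else 0) + (if y ≠ z ∧ sqnorm (y - z) = 1 then ε else 0) := by
    intro y
    unfold phiTG
    by_cases h0 : y = z
    · subst h0
      simp only [sub_self]
      have h00 : sqnorm (0 : Fin d → ℤ) = 0 := by unfold sqnorm; simp
      simp [h00]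
    · have hne : y - z ≠ 0 := sub_ne_zero.mpr h0
      by_cases h1 : sqnorm (y - z) = 1 <;> simp [hne, h0, h1, hε]
  rw [Finset.sum_congr rfl (fun y _ => hpt y), Finset.sum_add_distrib]
  have h1 : ∑ y ∈ Λ, (if y = z then (1:ℝ) else 0) ≤ 1 := by
    rw [Finset.sum_ite_eq' Λ z (fun _ => (1:ℝ))]
    split_ifs <;> norm_num
  have h2 : ∑ y ∈ Λ, (if y ≠ z ∧ sqnorm (y - z) = 1 then ε else 0) ≤ 2*d*ε := by
    rw [Finset.sum_ite, Finset.sum_const_zero, add_zero, Finset.sum_const, nsmul_eq_mul]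
    have hcard : (Λ.filter (fun y => y ≠ z ∧ sqnorm (y - z) = 1)).card ≤ 2 * d := by
      refine le_trans (Finset.card_le_card ?_) (card_nbrs Λ z)
      intro y hy
      rcases Finset.mem_filter.mp hy with ⟨hyΛ, _, h⟩
      exact Finset.mem_filter.mpr ⟨hyΛ, h⟩
    calc ((Λ.filter (fun y => y ≠ z ∧ sqnorm (y - z) = 1)).card : ℝ) * ε ≤ (2*d) * ε := by
          apply mul_le_mul_of_nonneg_right _ hε0
          exact_mod_cast hcard
      _ = 2*d*ε := by ring
  unfold Cbar
  rw [← hε]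
  linarith

/-- In a connected graph, every non-root vertex has a neighbor strictly closer to the root. -/
lemma exists_adj_dist {n : ℕ} {T : SimpleGraph (Fin n)} (hT : T.Connected)
    {r v : Fin n} (hv : v ≠ r) :
    ∃ w, T.Adj v w ∧ T.dist r w < T.dist r v := by
  obtain ⟨p, hp⟩ := hT.exists_walk_length_eq_dist r v
  obtain ⟨w, ha, q, hq⟩ := SimpleGraph.Walk.exists_eq_cons_of_ne hv p.reverse
  refine ⟨w, ha, ?_⟩
  have hlen : p.reverse.length = T.dist r v := by
    rw [SimpleGraph.Walk.length_reverse, hp]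
  rw [hq] at hlen
  simp only [SimpleGraph.Walk.length_cons] at hlen
  have : T.dist r w ≤ q.reverse.length := SimpleGraph.dist_le _
  rw [SimpleGraph.Walk.length_reverse] at this
  omega

/-- In a connected graph on `Fin (n+1)` there is an ordering (a permutation `σ`) and a
parent map `f` so that every non-root vertex is adjacent to its parent, which comes earlier. -/
lemma exists_parent {n : ℕ} (T : SimpleGraph (Fin (n+1))) (hT : T.Connected) :
    ∃ (σ : Equiv.Perm (Fin (n+1))) (f : Fin (n+1) → Fin (n+1)),
      ∀ i, i ≠ 0 → f i < i ∧ T.Adj (σ i) (σ (f i)) := by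
  classical
  set D : Fin (n+1) → ℕ := fun v => T.dist 0 v with hD
  set σ := Tuple.sort D with hσ
  have hmono : Monotone (D ∘ σ) := Tuple.monotone_sort D
  have key : ∀ i : Fin (n+1), i ≠ 0 → σ i ≠ 0 := by
    intro i hi hcon
    have h0 : (D ∘ σ) 0 ≤ (D ∘ σ) i := hmono (Fin.zero_le i)
    have hDi : D (σ i) = 0 := by rw [hcon]; simp [hD]
    have hD0 : D (σ 0) = 0 := by
      simp only [Function.comp] at h0; omega
    have hσ0 : σ 0 = 0 := ((hT.dist_eq_zero_iff).mp hD0).symm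
    exact hi (σ.injective (by rw [hσ0, hcon]))
  have hstep : ∀ i : Fin (n+1), ∃ j, i ≠ 0 → j < i ∧ T.Adj (σ i) (σ j) := by
    intro i
    by_cases hi : i = 0
    · exact ⟨0, fun h => absurd hi h⟩
    · obtain ⟨w, hw, hwd⟩ := exists_adj_dist hT (key i hi)
      refine ⟨σ.symm w, fun _ => ⟨?_, by rw [Equiv.apply_symm_apply]; exact hw⟩⟩
      by_contra hle
      push_neg at hle
      have hm := hmono hle
      simp only [Function.comp, Equiv.apply_symm_apply] at hm
      simp only [hD] at hm hwd
      omega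
  choose f hf using hstep
  exact ⟨σ, f, hf⟩

/-- Core summation lemma: summing a product of pair factors along a "parent" structure. -/
lemma core {α : Type*} [Fintype α] (g : α → α → ℝ) (hg : ∀ y z, 0 ≤ g y z)
    (C : ℝ) (hC : 0 ≤ C) (hsum : ∀ z, ∑ y : α, g y z ≤ C) :
    ∀ (n : ℕ) (f : Fin (n+1) → Fin (n+1)), (∀ i, i ≠ 0 → f i < i) →
      ∑ x : Fin (n+1) → α, ∏ i ∈ Finset.univ.erase 0, g (x i) (x (f i)) ≤
        (Fintype.card α : ℝ) * C ^ n := by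
  intro n
  induction n with
  | zero =>
    intro f hf
    have he : (Finset.univ.erase (0 : Fin 1)) = ∅ := by decide
    simp [he, Finset.card_univ]
  | succ n ih =>
    intro f hf
    have hL0 : (Fin.last (n+1)) ≠ 0 := by
      simp only [Ne, Fin.ext_iff, Fin.val_last, Fin.val_zero]
      omega
    have hfL : (f (Fin.last (n+1)) : ℕ) < n + 1 := by
      have := hf _ hL0
      simp only [Fin.lt_def, Fin.val_last] at this
      omega
    have hflt : ∀ i : Fin (n+1), i ≠ 0 → ((f i.castSucc : ℕ) < n+1) := by
      intro i hi
      have hic : (i.castSucc : Fin (n+2)) ≠ 0 := by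
        simp only [Ne, Fin.ext_iff, Fin.coe_castSucc, Fin.val_zero] at hi ⊢
        exact hi
      have h := hf _ hic
      simp only [Fin.lt_def, Fin.coe_castSucc] at h
      have := i.isLt
      omega
    set f' : Fin (n+1) → Fin (n+1) := fun i =>
      if h : (f i.castSucc : ℕ) < n+1 then ⟨f i.castSucc, h⟩ else 0 with hf'def
    have hf' : ∀ i, i ≠ 0 → f' i < i := by
      intro i hi
      have hlt := hflt i hi
      simp only [hf'def, dif_pos hlt, Fin.lt_def]
      have hic : (i.castSucc : Fin (n+2)) ≠ 0 := by
        simp only [Ne, Fin.ext_iff, Fin.coe_castSucc, Fin.val_zero] at hi ⊢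
        exact hi
      have h := hf _ hic
      simpa only [Fin.lt_def, Fin.coe_castSucc] using h
    have hcastf : ∀ i : Fin (n+1), i ≠ 0 → (f' i).castSucc = f i.castSucc := by
      intro i hi
      simp [hf'def, Nat.le_of_lt_succ (hflt i hi), Fin.ext_iff]
    -- decompose the sum along the last coordinate
    have hdecomp : ∑ x : Fin (n+2) → α, ∏ i ∈ Finset.univ.erase 0, g (x i) (x (f i))
        = ∑ y : α, ∑ x : Fin (n+1) → α,
            ∏ i ∈ Finset.univ.erase 0,
              g ((Fin.snoc x y : Fin (n+2) → α) i) ((Fin.snoc x y : Fin (n+2) → α) (f i)) := by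
      rw [← Equiv.sum_comp (Fin.insertNthEquiv (fun _ : Fin (n+2) => α) (Fin.last (n+1)))
        (fun x => ∏ i ∈ Finset.univ.erase 0, g (x i) (x (f i))), Fintype.sum_prod_type]
      refine Finset.sum_congr rfl fun y _ => Finset.sum_congr rfl fun x _ => ?_
      have he : (Fin.insertNthEquiv (fun _ : Fin (n+2) => α) (Fin.last (n+1))) (y, x)
          = (Fin.snoc x y : Fin (n+2) → α) := by
        show Fin.insertNth (α := fun _ => α) (Fin.last (n+1)) y x = _
        exact Fin.insertNth_last' y x
      rw [he]
    rw [hdecomp]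
    -- rewrite the inner product by splitting off the last factor
    have hinner : ∀ (y : α) (x : Fin (n+1) → α),
        ∏ i ∈ Finset.univ.erase 0,
            g ((Fin.snoc x y : Fin (n+2) → α) i) ((Fin.snoc x y : Fin (n+2) → α) (f i))
          = g y (x ⟨f (Fin.last (n+1)), hfL⟩) *
              ∏ i ∈ Finset.univ.erase 0, g (x i) (x (f' i)) := by
      intro y x
      rw [← Finset.mul_prod_erase _ _
        (Finset.mem_erase.mpr ⟨hL0, Finset.mem_univ (Fin.last (n+1))⟩)]
      have hjLc : (⟨(f (Fin.last (n+1)) : ℕ), hfL⟩ : Fin (n+1)).castSucc = f (Fin.last (n+1)) := by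
        apply Fin.ext
        simp
      congr 1
      · have e0 : (Fin.snoc x y : Fin (n+2) → α) (f (Fin.last (n+1)))
            = x ⟨(f (Fin.last (n+1)) : ℕ), hfL⟩ := by
          conv_lhs => rw [← hjLc]
          rw [Fin.snoc_castSucc]
        rw [Fin.snoc_last, e0]
      · refine Finset.prod_bij'
          (fun (a : Fin (n+2)) (ha : a ∈ (Finset.univ.erase 0).erase (Fin.last (n+1))) =>
            a.castPred (Finset.ne_of_mem_erase ha))
          (fun (b : Fin (n+1)) _ => b.castSucc) ?_ ?_ ?_ ?_ ?_
        · intro a ha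
          have ha0 : a ≠ 0 := Finset.ne_of_mem_erase (Finset.mem_of_mem_erase ha)
          refine Finset.mem_erase.mpr ⟨?_, Finset.mem_univ _⟩
          simp only [Ne, Fin.ext_iff, Fin.coe_castPred, Fin.val_zero] at ha0 ⊢
          exact ha0
        · intro b hb
          have hb0 : b ≠ 0 := Finset.ne_of_mem_erase hb
          refine Finset.mem_erase.mpr ⟨?_, Finset.mem_erase.mpr ⟨?_, Finset.mem_univ _⟩⟩
          · simp only [Ne, Fin.ext_iff, Fin.coe_castSucc, Fin.val_last]
            exact Nat.ne_of_lt b.isLt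
          · simp only [Ne, Fin.ext_iff, Fin.coe_castSucc, Fin.val_zero] at hb0 ⊢
            exact hb0
        · intro a ha
          exact Fin.castSucc_castPred a (Finset.ne_of_mem_erase ha)
        · intro b hb
          exact Fin.castPred_castSucc _
        · intro a ha
          have haL : a ≠ Fin.last (n+1) := Finset.ne_of_mem_erase ha
          have ha0 : a ≠ 0 := Finset.ne_of_mem_erase (Finset.mem_of_mem_erase ha)
          have hp0 : a.castPred haL ≠ 0 := by
            simp only [Ne, Fin.ext_iff, Fin.coe_castPred, Fin.val_zero] at ha0 ⊢
            exact ha0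
          have e1 : (Fin.snoc x y : Fin (n+2) → α) a = x (a.castPred haL) := by
            conv_lhs => rw [← Fin.castSucc_castPred a haL]
            rw [Fin.snoc_castSucc]
          have e2 : (Fin.snoc x y : Fin (n+2) → α) (f a) = x (f' (a.castPred haL)) := by
            have hfa : f a = (f' (a.castPred haL)).castSucc := by
              rw [hcastf _ hp0, Fin.castSucc_castPred]
            rw [hfa, Fin.snoc_castSucc]
          rw [e1, e2]
    have hP0 : ∀ x : Fin (n+1) → α, 0 ≤ ∏ i ∈ Finset.univ.erase 0, g (x i) (x (f' i)) :=
      fun x => Finset.prod_nonneg fun i _ => hg _ _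
    calc ∑ y : α, ∑ x : Fin (n+1) → α,
            ∏ i ∈ Finset.univ.erase 0,
              g ((Fin.snoc x y : Fin (n+2) → α) i) ((Fin.snoc x y : Fin (n+2) → α) (f i))
        = ∑ x : Fin (n+1) → α, ∑ y : α,
            g y (x ⟨f (Fin.last (n+1)), hfL⟩) * ∏ i ∈ Finset.univ.erase 0, g (x i) (x (f' i)) := by
          rw [Finset.sum_comm]
          exact Finset.sum_congr rfl fun x _ => Finset.sum_congr rfl fun y _ => hinner y x
      _ = ∑ x : Fin (n+1) → α,
            (∑ y : α, g y (x ⟨f (Fin.last (n+1)), hfL⟩)) *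
              ∏ i ∈ Finset.univ.erase 0, g (x i) (x (f' i)) := by
          exact Finset.sum_congr rfl fun x _ => (Finset.sum_mul _ _ _).symm
      _ ≤ ∑ x : Fin (n+1) → α, C * ∏ i ∈ Finset.univ.erase 0, g (x i) (x (f' i)) := by
          refine Finset.sum_le_sum fun x _ => ?_
          exact mul_le_mul_of_nonneg_right (hsum _) (hP0 x)
      _ = C * ∑ x : Fin (n+1) → α, ∏ i ∈ Finset.univ.erase 0, g (x i) (x (f' i)) := by
          rw [Finset.mul_sum]
      _ ≤ C * ((Fintype.card α : ℝ) * C ^ n) :=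
          mul_le_mul_of_nonneg_left (ih f' hf') hC
      _ = (Fintype.card α : ℝ) * C ^ (n+1) := by ring

end Aux

/-- tree-graph estimate: for every tree `T` on `{1, …, n}`,
`(1/|Λ|ⁿ) Σ_{x ∈ Λⁿ} Π_{{i,j} ∈ E(T)} (1 - e^{-β|V(x_i-x_j)|}) ≤ C̄_{J,d}(β)^{n-1}/|Λ|^{n-1}`. -/
theorem tree_graph_sum_bound
    (d : ℕ) (hd : 1 ≤ d) (J β : ℝ) (hJ : 0 < J) (hβ : 0 ≤ β)
    (Λ : Finset (Fin d → ℤ)) (n : ℕ) (hn : 2 ≤ n)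
    (T : SimpleGraph (Fin n)) (hT : T.IsTree) :
    ((Λ.card : ℝ) ^ n)⁻¹ *
        ∑ x ∈ Fintype.piFinset (fun _ : Fin n => Λ),
          graphProd T (fun i j => phiTG d β J (x i - x j)) ≤
      Cbar d β J ^ (n-1) / (Λ.card : ℝ) ^ (n-1) := by
  classical
  obtain ⟨m, rfl⟩ : ∃ m, n = m + 2 := ⟨n - 2, by omega⟩
  have hconn : T.Connected := hT.isConnected
  obtain ⟨σ, f, hσf⟩ := exists_parent T hconn
  set C := Cbar d β J with hCdef
  have hε0 : 0 ≤ 1 - Real.exp (-(4*β*J)) := by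
    have := exp_le_one hJ hβ; linarith
  have hC1 : (1:ℝ) ≤ C := by
    rw [hCdef]; unfold Cbar
    nlinarith [Nat.cast_nonneg (α := ℝ) d]
  have hC0 : (0:ℝ) ≤ C := le_trans zero_le_one hC1
  -- the weight function on the subtype
  set g : ↥Λ → ↥Λ → ℝ := fun y z => phiTG d β J ((y : Fin d → ℤ) - (z : Fin d → ℤ)) with hgdef
  have hg0 : ∀ y z : ↥Λ, 0 ≤ g y z := fun y z => phiTG_nonneg hJ hβ _
  have hgsum : ∀ z : ↥Λ, ∑ y : ↥Λ, g y z ≤ C := by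
    intro z
    have h := site_bound hJ hβ Λ (z : Fin d → ℤ)
    calc ∑ y : ↥Λ, g y z = ∑ y ∈ Λ, phiTG d β J (y - (z : Fin d → ℤ)) :=
          Finset.sum_coe_sort Λ (fun y => phiTG d β J (y - (z : Fin d → ℤ)))
      _ ≤ C := h
  -- Step 1: convert the `piFinset` sum to a sum over functions into the subtype
  have hconv : ∑ x ∈ Fintype.piFinset (fun _ : Fin (m+2) => Λ),
      graphProd T (fun i j => phiTG d β J (x i - x j))
      = ∑ x : Fin (m+2) → ↥Λ,
          graphProd T (fun i j => phiTG d β J ((x i : Fin d → ℤ) - (x j : Fin d → ℤ))) := by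
    refine Finset.sum_bij'
      (fun (x : Fin (m+2) → (Fin d → ℤ)) (hx : x ∈ Fintype.piFinset (fun _ => Λ)) =>
        (fun k => (⟨x k, Fintype.mem_piFinset.mp hx k⟩ : ↥Λ)))
      (fun (x : Fin (m+2) → ↥Λ) _ => fun k => (x k : Fin d → ℤ))
      (fun _ _ => Finset.mem_univ _)
      (fun x _ => Fintype.mem_piFinset.mpr fun k => (x k).2)
      (fun x hx => rfl)
      (fun x hx => rfl)
      (fun x hx => rfl)
  rw [hconv]
  -- Step 2: pointwise bound of the graph product by the product over parent edges
  have hpt : ∀ x : Fin (m+2) → ↥Λ,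
      graphProd T (fun i j => phiTG d β J ((x i : Fin d → ℤ) - (x j : Fin d → ℤ)))
        ≤ ∏ i ∈ Finset.univ.erase 0, g (x (σ i)) (x (σ (f i))) := by
    intro x
    set w : Fin (m+2) → Fin (m+2) → ℝ :=
      fun i j => phiTG d β J ((x i : Fin d → ℤ) - (x j : Fin d → ℤ)) with hw
    have hw0 : ∀ i j, 0 ≤ w i j := fun i j => phiTG_nonneg hJ hβ _
    have hw1 : ∀ i j, w i j ≤ 1 := fun i j => phiTG_le_one _
    have hwsymm : ∀ i j, w i j = w j i := by
      intro i j
      simp only [hw]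
      rw [← phiTG_neg, neg_sub]
    set A := Finset.univ.filter
      (fun p : Fin (m+2) × Fin (m+2) => p.1 < p.2 ∧ T.Adj p.1 p.2) with hA
    set e : Fin (m+2) → Fin (m+2) × Fin (m+2) :=
      fun i => if σ (f i) < σ i then (σ (f i), σ i) else (σ i, σ (f i)) with he
    have heA : ∀ i ∈ Finset.univ.erase (0 : Fin (m+2)), e i ∈ A := by
      intro i hi
      have hi0 : i ≠ 0 := Finset.ne_of_mem_erase hi
      obtain ⟨hlt, hadj⟩ := hσf i hi0
      simp only [he, hA, Finset.mem_filter, Finset.mem_univ, true_and]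
      split_ifs with h
      · exact ⟨h, hadj.symm⟩
      · exact ⟨lt_of_le_of_ne (not_lt.mp h) hadj.ne, hadj⟩
    have hinj : ∀ i ∈ Finset.univ.erase (0 : Fin (m+2)),
        ∀ j ∈ Finset.univ.erase (0 : Fin (m+2)), e i = e j → i = j := by
      intro i hi j hj hij
      have hi0 : i ≠ 0 := Finset.ne_of_mem_erase hi
      have hj0 : j ≠ 0 := Finset.ne_of_mem_erase hj
      have hfi := (hσf i hi0).1
      have hfj := (hσf j hj0).1
      simp only [he] at hij
      have key : (σ i = σ j) ∨ (σ (f i) = σ j ∧ σ i = σ (f j)) := by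
        split_ifs at hij with h1 h2 h2 <;> rw [Prod.mk.injEq] at hij
        · exact Or.inl hij.2
        · exact Or.inr ⟨hij.1, hij.2⟩
        · exact Or.inr ⟨hij.2, hij.1⟩
        · exact Or.inl hij.1
      rcases key with h | ⟨h1, h2⟩
      · exact σ.injective h
      · have e1 : f i = j := σ.injective h1
        have e2 : i = f j := σ.injective h2
        exfalso
        rw [e1] at hfi
        rw [← e2] at hfj
        exact absurd hfi (asymm hfj)
    have hsub : (Finset.univ.erase (0 : Fin (m+2))).image e ⊆ A := by
      intro p hp
      obtain ⟨i, hi, rfl⟩ := Finset.mem_image.mp hp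
      exact heA i hi
    have hAsplit : ∏ p ∈ A, w p.1 p.2
        ≤ ∏ p ∈ (Finset.univ.erase (0 : Fin (m+2))).image e, w p.1 p.2 := by
      rw [← Finset.prod_sdiff hsub]
      have h1 : ∏ p ∈ A \ (Finset.univ.erase (0 : Fin (m+2))).image e, w p.1 p.2 ≤ 1 :=
        Finset.prod_le_one (fun p _ => hw0 _ _) (fun p _ => hw1 _ _)
      have h2 : (0:ℝ) ≤ ∏ p ∈ (Finset.univ.erase (0 : Fin (m+2))).image e, w p.1 p.2 :=
        Finset.prod_nonneg fun p _ => hw0 _ _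
      nlinarith
    have himg : ∏ p ∈ (Finset.univ.erase (0 : Fin (m+2))).image e, w p.1 p.2
        = ∏ i ∈ Finset.univ.erase (0 : Fin (m+2)), w (e i).1 (e i).2 :=
      Finset.prod_image hinj
    have hval : ∀ i ∈ Finset.univ.erase (0 : Fin (m+2)),
        w (e i).1 (e i).2 = g (x (σ i)) (x (σ (f i))) := by
      intro i _
      simp only [he]
      split_ifs with h
      · exact hwsymm _ _
      · rfl
    calc graphProd T (fun i j => phiTG d β J ((x i : Fin d → ℤ) - (x j : Fin d → ℤ)))
        = ∏ p ∈ A, w p.1 p.2 := rfl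
      _ ≤ ∏ p ∈ (Finset.univ.erase (0 : Fin (m+2))).image e, w p.1 p.2 := hAsplit
      _ = ∏ i ∈ Finset.univ.erase (0 : Fin (m+2)), w (e i).1 (e i).2 := himg
      _ = ∏ i ∈ Finset.univ.erase (0 : Fin (m+2)), g (x (σ i)) (x (σ (f i))) :=
          Finset.prod_congr rfl hval
  -- Step 3: reindex by σ and apply the core lemma
  have hre : ∑ x : Fin (m+2) → ↥Λ, ∏ i ∈ Finset.univ.erase 0, g (x (σ i)) (x (σ (f i)))
      = ∑ x : Fin (m+2) → ↥Λ, ∏ i ∈ Finset.univ.erase 0, g (x i) (x (f i)) := by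
    rw [← Equiv.sum_comp (Equiv.arrowCongr σ.symm (Equiv.refl ↥Λ))
      (fun x => ∏ i ∈ Finset.univ.erase 0, g (x i) (x (f i)))]
    refine Finset.sum_congr rfl fun x _ => Finset.prod_congr rfl fun i _ => ?_
    rfl
  have hcore := core g hg0 C hC0 hgsum (m+1) f (fun i hi => (hσf i hi).1)
  have hmain : ∑ x : Fin (m+2) → ↥Λ,
      graphProd T (fun i j => phiTG d β J ((x i : Fin d → ℤ) - (x j : Fin d → ℤ)))
      ≤ (Λ.card : ℝ) * C ^ (m+1) := by
    calc ∑ x : Fin (m+2) → ↥Λ,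
          graphProd T (fun i j => phiTG d β J ((x i : Fin d → ℤ) - (x j : Fin d → ℤ)))
        ≤ ∑ x : Fin (m+2) → ↥Λ, ∏ i ∈ Finset.univ.erase 0, g (x (σ i)) (x (σ (f i))) :=
          Finset.sum_le_sum fun x _ => hpt x
      _ = ∑ x : Fin (m+2) → ↥Λ, ∏ i ∈ Finset.univ.erase 0, g (x i) (x (f i)) := hre
      _ ≤ (Fintype.card ↥Λ : ℝ) * C ^ (m+1) := hcore
      _ = (Λ.card : ℝ) * C ^ (m+1) := by rw [Fintype.card_coe]
  have hS0 : 0 ≤ ∑ x : Fin (m+2) → ↥Λ,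
      graphProd T (fun i j => phiTG d β J ((x i : Fin d → ℤ) - (x j : Fin d → ℤ))) :=
    Finset.sum_nonneg fun x _ => Finset.prod_nonneg fun p _ => phiTG_nonneg hJ hβ _
  have hsub1 : m + 2 - 1 = m + 1 := rfl
  rw [hsub1]
  by_cases hΛ : Λ.card = 0
  · rw [hΛ]
    push_cast
    rw [zero_pow (by omega : m + 2 ≠ 0), zero_pow (by omega : m + 1 ≠ 0), inv_zero,
      zero_mul, div_zero]
  · have hN : (0:ℝ) < (Λ.card : ℝ) := by
      exact_mod_cast Nat.pos_of_ne_zero hΛ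
    have step1 : ((Λ.card : ℝ) ^ (m+2))⁻¹ *
        (∑ x : Fin (m+2) → ↥Λ,
          graphProd T (fun i j => phiTG d β J ((x i : Fin d → ℤ) - (x j : Fin d → ℤ))))
        ≤ ((Λ.card : ℝ) ^ (m+2))⁻¹ * ((Λ.card : ℝ) * C ^ (m+1)) := by
      apply mul_le_mul_of_nonneg_left hmain
      positivity
    have step2 : ((Λ.card : ℝ) ^ (m+2))⁻¹ * ((Λ.card : ℝ) * C ^ (m+1))
        = C ^ (m+1) / (Λ.card : ℝ) ^ (m+1) := by
      field_simp
      ring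
    calc ((Λ.card : ℝ) ^ (m+2))⁻¹ *
        (∑ x : Fin (m+2) → ↥Λ,
          graphProd T (fun i j => phiTG d β J ((x i : Fin d → ℤ) - (x j : Fin d → ℤ))))
        ≤ ((Λ.card : ℝ) ^ (m+2))⁻¹ * ((Λ.card : ℝ) * C ^ (m+1)) := step1
      _ = C ^ (m+1) / (Λ.card : ℝ) ^ (m+1) := step2

end IsingCE
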